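/- arXiv:2412.17930 — 3 statements merged into one kernel-verified Lean document; each statement's English description precedes it below -/
import Mathlib

section
/- For every finite sequence f of unfolding instructions of length n ≥ 1, the number of maximal runs (maximal blocks of consecutive equal symbols) in the paperfolding word P_f equals 2^{n-1}. -/
/-- Paperfolding word; instructions are given with the most recent (last) instruction first. -/
def foldAux : List ℤ → List ℤ
  | [] => []
  | a :: f => foldAux f ++ a :: (foldAux f).reverse.map (fun x => -x)

/-- `paper f` is the finite paperfolding word `P_f` for instructions `f = [f_0, f_1, …]`,
satisfying `P_ε = ε` and `P_{f·a} = P_f · a · (-P_f^R)`. -/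
def paper (f : List ℤ) : List ℤ := foldAux f.reverse

/-- The sequence of lengths of the maximal runs (maximal blocks of equal symbols) of `w`. -/
def runLengths (w : List ℤ) : List ℕ := (w.splitBy (fun a b => a == b)).map List.length

/-- `p` (indexed from 1) is the infinite paperfolding sequence with instructions `f`,
i.e. every finite paperfolding word of a prefix of `f` is a prefix of `p`. -/
def IsLimit (f : ℕ → ℤ) (p : ℕ → ℤ) : Prop :=
  ∀ m k, k < (paper ((List.range m).map f)).length →
    p (k + 1) = (paper ((List.range m).map f)).getD k 0

/-- `E` enumerates, in increasing order (`E 1 < E 2 < ⋯`, with the convention `E 0 = 0`),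
the ending positions of the maximal runs of the sequence `p` (indexed from 1):
position `m ≥ 1` ends a run iff `p m ≠ p (m+1)`. -/
def IsRunEnds (p : ℕ → ℤ) (E : ℕ → ℕ) : Prop :=
  E 0 = 0 ∧ StrictMono E ∧ ∀ m, 1 ≤ m → ((∃ n, 1 ≤ n ∧ E n = m) ↔ p m ≠ p (m + 1))

/-- The number of maximal runs of `w`: the number of indices `i` (1-indexed, `1 ≤ i ≤ |w|`)
with `i = 1` or `w[i] ≠ w[i-1]` (here 0-indexed: `i = 0` or `w[i] ≠ w[i-1]`). -/
def runCount (w : List ℤ) : ℕ :=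
  ((List.range w.length).filter (fun i => i == 0 || w.getD i 0 != w.getD (i - 1) 0)).length

def rc : List ℤ → ℕ
  | [] => 0
  | [_] => 1
  | a :: b :: t => (if a = b then 0 else 1) + rc (b :: t)

def dcount (a : ℤ) (w : List ℤ) : ℕ :=
  ((List.range w.length).filter (fun i => w.getD i 0 != (a :: w).getD i 0)).length

lemma dcount_cons (a b : ℤ) (t : List ℤ) :
    dcount a (b :: t) = (if a = b then 0 else 1) + dcount b t := by
  unfold dcount
  rw [List.length_cons, List.range_succ_eq_map, List.filter_cons, List.filter_map]
  have h1 : ((fun i => (b :: t).getD i 0 != (a :: b :: t).getD i 0) ∘ Nat.succ)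
      = (fun i => t.getD i 0 != (b :: t).getD i 0) := rfl
  rw [h1]
  by_cases h : a = b
  · subst h; simp
  · have hb : (b != a) = true := by simp [bne]; exact fun he => h he.symm
    simp [h, hb]
    omega

lemma runCount_cons (a : ℤ) (w : List ℤ) : runCount (a :: w) = 1 + dcount a w := by
  unfold runCount dcount
  rw [List.length_cons, List.range_succ_eq_map, List.filter_cons, List.filter_map]
  have h1 : ((fun i => i == 0 || (a :: w).getD i 0 != (a :: w).getD (i - 1) 0) ∘ Nat.succ)
      = (fun i => w.getD i 0 != (a :: w).getD i 0) := rfl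
  rw [h1]
  simp
  omega

lemma runCount_eq_rc (w : List ℤ) : runCount w = rc w := by
  match w with
  | [] => rfl
  | a :: w =>
    rw [runCount_cons]
    induction w generalizing a with
    | nil => rfl
    | cons b t ih =>
      rw [dcount_cons, rc, ← ih b]
      omega

lemma rc_append (u v : List ℤ) (hu : u ≠ []) :
    rc (u ++ v) + (if v.head? = u.getLast? then 1 else 0) = rc u + rc v := by
  induction u with
  | nil => exact absurd rfl hu
  | cons c u ih =>
    match u with
    | [] =>
      match v with
      | [] => simp [rc]
      | d :: v' =>
        simp only [List.singleton_append, rc, List.head?, List.getLast?]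
        by_cases h : c = d <;> simp [h, eq_comm] <;> omega
    | e :: u'' =>
      have ih' := ih (by simp)
      have h2 : (c :: e :: u'') ++ v = c :: e :: (u'' ++ v) := by simp
      have h3 : (e :: u'') ++ v = e :: (u'' ++ v) := by simp
      rw [h3] at ih'
      rw [h2, rc]
      have hl : (c :: e :: u'').getLast? = (e :: u'').getLast? := by
        simp [List.getLast?]
      rw [hl, rc]
      omega

lemma rc_reverse (w : List ℤ) : rc w.reverse = rc w := by
  induction w with
  | nil => rfl
  | cons a w ih =>
    match w with
    | [] => rfl
    | b :: t =>
      rw [List.reverse_cons]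
      have h := rc_append (b :: t).reverse [a] (by simp)
      rw [ih] at h
      have hg : (b :: t).reverse.getLast? = some b := by
        rw [List.getLast?_reverse]; rfl
      rw [hg] at h
      simp only [rc]
      by_cases hab : a = b <;> simp [hab, rc] at h <;> simp [hab] <;> omega

lemma rc_neg (w : List ℤ) : rc (w.map (fun x => -x)) = rc w := by
  induction w with
  | nil => rfl
  | cons a w ih =>
    match w with
    | [] => rfl
    | b :: t =>
      simp only [List.map_cons] at *
      rw [rc, rc, ← ih]
      congr 1
      by_cases h : a = b <;> simp [h]

lemma foldAux_mem {l : List ℤ} (hl : ∀ a ∈ l, a = -1 ∨ a = 1) :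
    ∀ x ∈ foldAux l, x = -1 ∨ x = 1 := by
  induction l with
  | nil => intro x hx; simp [foldAux] at hx
  | cons a t ih =>
    intro x hx
    have ih' := ih (fun b hb => hl b (List.mem_cons_of_mem a hb))
    simp only [foldAux, List.mem_append, List.mem_cons, List.mem_map,
      List.mem_reverse] at hx
    rcases hx with h | h | ⟨y, hy, rfl⟩
    · exact ih' x h
    · exact h ▸ hl a List.mem_cons_self
    · rcases ih' y hy with h | h <;> simp [h]

lemma rc_foldAux (l : List ℤ) (hl : ∀ a ∈ l, a = -1 ∨ a = 1) (hne : l ≠ []) :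
    rc (foldAux l) = 2 ^ (l.length - 1) := by
  induction l with
  | nil => exact absurd rfl hne
  | cons a t ih =>
    match t with
    | [] => simp [foldAux, rc]
    | b :: t' =>
      set u := foldAux (b :: t') with hu
      have ht : ∀ c ∈ b :: t', c = -1 ∨ c = 1 :=
        fun c hc => hl c (List.mem_cons_of_mem a hc)
      have hune : u ≠ [] := by
        rw [hu]; simp only [foldAux]; simp
      have hihu : rc u = 2 ^ ((b :: t').length - 1) := ih ht (by simp)
      obtain ⟨x, hx⟩ := List.getLast?_isSome.mpr hune |> Option.isSome_iff_exists.mp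
      have hxmem : x ∈ u := List.mem_of_mem_getLast? hx
      have hxpm : x = -1 ∨ x = 1 := foldAux_mem ht x hxmem
      have hapm : a = -1 ∨ a = 1 := hl a List.mem_cons_self
      set v := u.reverse.map (fun x => -x) with hv
      have hvh : v.head? = some (-x) := by
        rw [hv, List.head?_map, List.head?_reverse, hx]; rfl
      have hrcv : rc v = rc u := by rw [hv, rc_neg, rc_reverse]
      have hfold : foldAux (a :: b :: t') = u ++ a :: v := rfl
      have h1 := rc_append u (a :: v) hune
      have h2 := rc_append [a] v (by simp)
      rw [List.singleton_append] at h2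
      have hgl : ([a] : List ℤ).getLast? = some a := rfl
      rw [hgl, hvh, hrcv] at h2
      have hh : (a :: v).head? = some a := rfl
      rw [hh, hx] at h1
      have hone : (if (some a : Option ℤ) = some x then 1 else 0)
          + (if (some (-x) : Option ℤ) = some a then 1 else 0) = 1 := by
        rcases hxpm with rfl | rfl <;> rcases hapm with rfl | rfl <;> norm_num
      have h2' : rc (a :: v) + (if (some (-x) : Option ℤ) = some a then 1 else 0)
          = rc [a] + rc u := h2
      have hrca : rc ([a] : List ℤ) = 1 := rfl
      rw [hfold]
      have : rc (u ++ a :: v) = 2 * rc u := by omega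
      rw [this, hihu]
      have hlen : 1 ≤ (b :: t').length := by simp
      simp only [List.length_cons] at *
      rw [← pow_succ']
      congr 1

theorem paper_runCount (f : List ℤ) (hf : ∀ a ∈ f, a = -1 ∨ a = 1) (hn : 1 ≤ f.length) :
    runCount (paper f) = 2 ^ (f.length - 1) := by
  rw [runCount_eq_rc]
  have h : paper f = foldAux f.reverse := rfl
  rw [h, rc_foldAux]
  · rw [List.length_reverse]
  · intro a ha
    exact hf a (List.mem_reverse.mp ha)
  · intro hc
    rw [List.reverse_eq_nil_iff] at hc
    subst hc
    simp at hn
end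

section
/- Every maximal run in any finite paperfolding word P_f (with |f| ≥ 1) has length 1, 2, or 3. Consequently, every maximal run in any infinite paperfolding sequence has length 1, 2, or 3. -/
lemma foldAux_length (f : List ℤ) : (foldAux f).length = 2 ^ f.length - 1 := by
  induction f with
  | nil => rfl
  | cons a f ih =>
    have h : 1 ≤ 2 ^ f.length := Nat.one_le_two_pow
    simp only [foldAux, List.length_append, List.length_cons, List.length_map,
      List.length_reverse, ih, List.length_cons, pow_succ]
    omega

lemma foldAux_even (a : ℤ) : ∀ (g : List ℤ) (m : ℕ), 2 * m < (foldAux (g ++ [a])).length →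
    (foldAux (g ++ [a])).getD (2 * m) 0 = (-1 : ℤ) ^ m * a := by
  intro g
  induction g with
  | nil =>
    intro m hm
    have h0 : foldAux ([] ++ [a]) = [a] := rfl
    rw [h0] at hm ⊢
    simp only [List.length_singleton] at hm
    have hm0 : m = 0 := by omega
    subst hm0
    simp
  | cons b g ih =>
    intro m hm
    have hW : (foldAux (g ++ [a])).length = 2 ^ (g.length + 1) - 1 := by
      rw [foldAux_length]; simp
    set W := foldAux (g ++ [a]) with hWdef
    obtain ⟨X, hX1, hX⟩ : ∃ X, 1 ≤ X ∧ W.length = 2 * X - 1 :=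
      ⟨2 ^ g.length, Nat.one_le_two_pow, by rw [hW, pow_succ, Nat.mul_comm]⟩
    have hcons : foldAux ((b :: g) ++ [a]) = W ++ b :: W.reverse.map (fun x => -x) := rfl
    rw [hcons] at hm ⊢
    simp only [List.length_append, List.length_cons, List.length_map,
      List.length_reverse] at hm
    rcases lt_or_ge (2 * m) W.length with hlt | hge
    · rw [List.getD_append _ _ _ _ hlt]
      exact ih m hlt
    · have hgt : W.length < 2 * m := by omega
      rw [List.getD_append_right _ _ _ _ hge]
      have hidx : 2 * m - W.length = (2 * m - W.length - 1) + 1 := by omega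
      rw [hidx, List.getD_cons_succ]
      set j := 2 * m - W.length - 1 with hj
      have hjlt : j < W.length := by omega
      set m'' := 2 * X - 1 - m with hm''
      have hWlen : W.length - 1 - j = 2 * m'' := by omega
      have hlt2 : 2 * m'' < W.length := by omega
      have hmaplen : (W.reverse.map (fun x : ℤ => -x)).length = W.length := by simp
      rw [List.getD_eq_getElem _ _ (by omega : j < (W.reverse.map (fun x : ℤ => -x)).length)]
      rw [List.getElem_map, List.getElem_reverse]
      have hval := ih m'' hlt2
      rw [List.getD_eq_getElem _ _ hlt2] at hval
      have hEq : W[W.length - 1 - j]'(by omega) = W[2 * m'']'hlt2 := by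
        congr 1
      rw [hEq, hval]
      have hodd2 : Odd (m + m'') := ⟨X - 1, by omega⟩
      have hs : (-1 : ℤ) ^ m * (-1 : ℤ) ^ m'' = -1 := by
        rw [← pow_add]; exact hodd2.neg_one_pow
      have hsq : (-1 : ℤ) ^ m * (-1 : ℤ) ^ m = 1 := by
        rw [← pow_add]; exact Even.neg_one_pow ⟨m, rfl⟩
      have h2 : (-1 : ℤ) ^ m'' = -(-1 : ℤ) ^ m := by
        calc (-1 : ℤ) ^ m'' = ((-1 : ℤ) ^ m * (-1 : ℤ) ^ m) * (-1 : ℤ) ^ m'' := by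
              rw [hsq, one_mul]
          _ = (-1 : ℤ) ^ m * ((-1 : ℤ) ^ m * (-1 : ℤ) ^ m'') := by ring
          _ = (-1 : ℤ) ^ m * (-1) := by rw [hs]
          _ = -(-1 : ℤ) ^ m := by ring
      rw [h2]; ring

lemma paper_getD (f : List ℤ) (hf : f ≠ []) (m : ℕ) (hm : 2 * m < (paper f).length) :
    (paper f).getD (2 * m) 0 = (-1 : ℤ) ^ m * f.headD 0 := by
  obtain ⟨a, g, rfl⟩ := List.exists_cons_of_ne_nil hf
  have hrev : (a :: g).reverse = g.reverse ++ [a] := by simp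
  unfold paper at hm ⊢
  rw [hrev] at hm ⊢
  simpa using foldAux_even a g.reverse m hm

lemma sign_contra {x : ℤ} (h : x = -1 ∨ x = 1) (m : ℕ)
    (heq : (-1 : ℤ) ^ m * x = (-1 : ℤ) ^ (m + 1) * x) : False := by
  rcases Nat.even_or_odd m with hm | hm
  · rw [hm.neg_one_pow, Odd.neg_one_pow (by exact hm.add_one)] at heq
    rcases h with rfl | rfl <;> norm_num at heq
  · rw [hm.neg_one_pow, Even.neg_one_pow (by exact hm.add_one)] at heq
    rcases h with rfl | rfl <;> norm_num at heq

lemma no_four (f : List ℤ) (hf : ∀ a ∈ f, a = -1 ∨ a = 1) (hne : f ≠ [])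
    (i : ℕ) (hi : i + 3 < (paper f).length)
    (h01 : (paper f).getD i 0 = (paper f).getD (i + 1) 0)
    (h12 : (paper f).getD (i + 1) 0 = (paper f).getD (i + 2) 0)
    (h23 : (paper f).getD (i + 2) 0 = (paper f).getD (i + 3) 0) : False := by
  have hhead : f.headD 0 = -1 ∨ f.headD 0 = 1 := by
    obtain ⟨a, g, rfl⟩ := List.exists_cons_of_ne_nil hne
    exact hf a (List.mem_cons_self)
  rcases Nat.even_or_odd i with he | ho
  · obtain ⟨m, hm⟩ := he
    have A := paper_getD f hne m (by omega)
    have B := paper_getD f hne (m + 1) (by omega)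
    have hAB : (paper f).getD (2 * m) 0 = (paper f).getD (2 * (m + 1)) 0 := by
      rw [show 2 * m = i by omega, show 2 * (m + 1) = i + 2 by omega]
      exact h01.trans h12
    exact sign_contra hhead m (by rw [← A, ← B]; exact hAB)
  · obtain ⟨m, hm⟩ := ho
    have A := paper_getD f hne (m + 1) (by omega)
    have B := paper_getD f hne (m + 2) (by omega)
    have hAB : (paper f).getD (2 * (m + 1)) 0 = (paper f).getD (2 * (m + 2)) 0 := by
      rw [show 2 * (m + 1) = i + 1 by omega, show 2 * (m + 2) = i + 3 by omega]
      exact h12.trans h23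
    exact sign_contra hhead (m + 1) (by rw [← A, ← B]; exact hAB)

lemma finite_part (f : List ℤ) (hf : ∀ a ∈ f, a = -1 ∨ a = 1) (h1 : 1 ≤ f.length) :
    ∀ r ∈ runLengths (paper f), r = 1 ∨ r = 2 ∨ r = 3 := by
  intro r hr
  unfold runLengths at hr
  obtain ⟨c, hc, rfl⟩ := List.mem_map.1 hr
  have hne := List.ne_nil_of_mem_splitBy hc
  have hlen1 : 1 ≤ c.length := List.length_pos_iff.2 hne
  by_contra hcon
  push_neg at hcon
  have h4 : 4 ≤ c.length := by omega
  have hchain := List.isChain_of_mem_splitBy hc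
  have hinf : c <:+: paper f := by
    have hfl := List.flatten_splitBy (fun a b : ℤ => a == b) (paper f)
    exact hfl ▸ List.infix_of_mem_flatten hc
  match c, h4 with
  | a0 :: a1 :: a2 :: a3 :: rest, _ =>
    simp only [List.isChain_cons_cons, beq_iff_eq] at hchain
    obtain ⟨e01, e12, e23, -⟩ := hchain
    obtain ⟨s, t, hst⟩ := hinf
    have hst' : s ++ ((a0 :: a1 :: a2 :: a3 :: rest) ++ t) = paper f := by
      rw [← List.append_assoc]; exact hst
    have hlenf : (paper f).length = s.length + (4 + rest.length) + t.length := by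
      rw [← hst']
      simp only [List.length_append, List.length_cons]
      omega
    have hfne : f ≠ [] := by
      intro h; rw [h] at h1; simp at h1
    have hget : ∀ j, j < 4 + rest.length →
        (paper f).getD (s.length + j) 0 = (a0 :: a1 :: a2 :: a3 :: rest).getD j 0 := by
      intro j hj
      rw [← hst', List.getD_append_right _ _ _ _ (by omega)]
      rw [show s.length + j - s.length = j by omega]
      rw [List.getD_append _ _ _ _ (by simp only [List.length_cons]; omega)]
    have g0 := hget 0 (by omega)
    have g1 := hget 1 (by omega)
    have g2 := hget 2 (by omega)
    have g3 := hget 3 (by omega)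
    simp only [Nat.add_zero] at g0
    have d0 : (a0 :: a1 :: a2 :: a3 :: rest).getD 0 0 = a0 := rfl
    have d1 : (a0 :: a1 :: a2 :: a3 :: rest).getD 1 0 = a1 := rfl
    have d2 : (a0 :: a1 :: a2 :: a3 :: rest).getD 2 0 = a2 := rfl
    have d3 : (a0 :: a1 :: a2 :: a3 :: rest).getD 3 0 = a3 := rfl
    rw [d0] at g0; rw [d1] at g1; rw [d2] at g2; rw [d3] at g3
    apply no_four f hf hfne s.length (by omega)
    · rw [g0, g1, e01]
    · rw [g1, g2, e12]
    · rw [g2, g3, e23]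

lemma p_odd (f : ℕ → ℤ) (p : ℕ → ℤ) (hlim : IsLimit f p) (m : ℕ) :
    p (2 * m + 1) = (-1 : ℤ) ^ m * f 0 := by
  set M := 2 * m + 2 with hM
  have hlen : (paper ((List.range M).map f)).length = 2 ^ M - 1 := by
    unfold paper; rw [foldAux_length]; simp
  have hpow : M < 2 ^ M := Nat.lt_two_pow_self
  have hlt : 2 * m < (paper ((List.range M).map f)).length := by omega
  have hp := hlim M (2 * m) hlt
  rw [hp, paper_getD _ (by simp [hM]) m hlt]
  congr 1
  rw [hM, show 2 * m + 2 = (2 * m + 1) + 1 from rfl, List.range_succ_eq_map]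
  simp

theorem run_lengths_le_three :
    (∀ f : List ℤ, (∀ a ∈ f, a = -1 ∨ a = 1) → 1 ≤ f.length →
      ∀ r ∈ runLengths (paper f), r = 1 ∨ r = 2 ∨ r = 3) ∧
    (∀ (f p : ℕ → ℤ) (E : ℕ → ℕ), (∀ n, f n = -1 ∨ f n = 1) → IsLimit f p →
      IsRunEnds p E → ∀ n, 1 ≤ n →
        E n - E (n - 1) = 1 ∨ E n - E (n - 1) = 2 ∨ E n - E (n - 1) = 3) := by
  constructor
  · exact finite_part
  · intro f p E hf hlim hE n hn
    obtain ⟨hE0, hmono, hiff⟩ := hE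
    have hlt : E (n - 1) < E n := hmono (by omega)
    by_contra hcon
    push_neg at hcon
    have h4 : E (n - 1) + 4 ≤ E n := by omega
    -- constancy of p on (E (n-1), E n]
    have hconst : ∀ m, E (n - 1) + 1 ≤ m → m + 1 ≤ E n → p m = p (m + 1) := by
      intro m hm1 hm2
      by_contra hne
      obtain ⟨k, hk1, hk2⟩ := (hiff m (by omega)).2 hne
      have hk3 : n - 1 < k := by
        rw [← hmono.lt_iff_lt, hk2]; omega
      have hk4 : k < n := by
        rw [← hmono.lt_iff_lt, hk2]; omega
      omega
    set b := E (n - 1) with hb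
    have c1 : p (b + 1) = p (b + 2) := hconst (b + 1) (by omega) (by omega)
    have c2 : p (b + 2) = p (b + 3) := hconst (b + 2) (by omega) (by omega)
    have c3 : p (b + 3) = p (b + 4) := hconst (b + 3) (by omega) (by omega)
    have hhead : f 0 = -1 ∨ f 0 = 1 := hf 0
    rcases Nat.even_or_odd b with he | ho
    · obtain ⟨m, hm⟩ := he
      have A := p_odd f p hlim m
      have B := p_odd f p hlim (m + 1)
      have hAB : p (2 * m + 1) = p (2 * (m + 1) + 1) := by
        rw [show 2 * m + 1 = b + 1 by omega, show 2 * (m + 1) + 1 = b + 3 by omega]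
        exact c1.trans c2
      exact sign_contra hhead m (by rw [← A, ← B]; exact hAB)
    · obtain ⟨m, hm⟩ := ho
      have A := p_odd f p hlim (m + 1)
      have B := p_odd f p hlim (m + 2)
      have hAB : p (2 * (m + 1) + 1) = p (2 * (m + 2) + 1) := by
        rw [show 2 * (m + 1) + 1 = b + 2 by omega, show 2 * (m + 2) + 1 = b + 4 by omega]
        exact c2.trans c3
      exact sign_contra hhead (m + 1) (by rw [← A, ← B]; exact hAB)
end

section
/- If a square zz occurs in the run-length sequence of an infinite paperfolding sequence, then |z| = 1 or |z| = 3. -/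
set_option linter.unusedSectionVars false
set_option maxHeartbeats 1000000

/-! ### Closed formula for the paperfolding sequence -/

/-- Shift of an instruction sequence. -/
def shiftF (f : ℕ → ℤ) : ℕ → ℤ := fun i => f (i+1)

/-- Closed formula: for `n = 2^j(2k+1)`, the paperfolding value is `f j * (-1)^k`. -/
def pf (f : ℕ → ℤ) (n : ℕ) : ℤ :=
  f (padicValNat 2 n) * (-1) ^ (n / 2 ^ (padicValNat 2 n + 1))

lemma pf_odd (f : ℕ → ℤ) (k : ℕ) : pf f (2*k+1) = f 0 * (-1)^k := by
  unfold pf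
  rw [padicValNat.eq_zero_of_not_dvd (by omega)]
  have : (2*k+1) / 2^(0+1) = k := by omega
  rw [this]

lemma pf_even (f : ℕ → ℤ) (n : ℕ) (hn : n ≠ 0) :
    pf f (2*n) = pf (shiftF f) n := by
  unfold pf shiftF
  have h1 : padicValNat 2 (2*n) = padicValNat 2 n + 1 := by
    rw [padicValNat.mul (by norm_num) hn, padicValNat.self (by norm_num)]
    omega
  rw [h1]
  have h2 : 2*n / 2 ^ (padicValNat 2 n + 1 + 1) = n / 2 ^ (padicValNat 2 n + 1) := by
    rw [pow_succ' 2 (padicValNat 2 n + 1), Nat.mul_div_mul_left _ _ (by norm_num)]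
  rw [h2]

lemma pf_pow2 (f : ℕ → ℤ) (m : ℕ) : pf f (2^m) = f m := by
  unfold pf
  rw [padicValNat.prime_pow]
  have : (2:ℕ)^m / 2^(m+1) = 0 := Nat.div_eq_of_lt (by
    exact Nat.pow_lt_pow_right (by norm_num) (by omega))
  rw [this, pow_zero, mul_one]

lemma pf_unit (f : ℕ → ℤ) (hf : ∀ n, f n = -1 ∨ f n = 1) (n : ℕ) :
    pf f n = 1 ∨ pf f n = -1 := by
  unfold pf
  rcases hf (padicValNat 2 n) with h | h <;>
    rcases Nat.even_or_odd (n / 2 ^ (padicValNat 2 n + 1)) with hp | hp <;>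
      simp [h, hp.neg_one_pow]

lemma neg_one_pow_opp {a b : ℕ} (h : (a + b) % 2 = 1) : (-1:ℤ)^a = -(-1)^b := by
  rcases Nat.even_or_odd a with ha | ha <;> rcases Nat.even_or_odd b with hb | hb <;>
    first
      | (exfalso; rcases ha with ⟨x, hx⟩; rcases hb with ⟨y, hy⟩; omega)
      | simp [ha.neg_one_pow, hb.neg_one_pow]

lemma unit_ne_zero {x : ℤ} (hx : x = -1 ∨ x = 1) : x ≠ 0 := by
  rcases hx with h | h <;> simp [h]

lemma neq_of_odd_sum {x : ℤ} (hx : x = -1 ∨ x = 1) {a b : ℕ} (h : (a+b) % 2 = 1) :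
    x * (-1)^a ≠ x * (-1)^b := by
  rw [neg_one_pow_opp h]
  intro hc
  have hb : ((-1:ℤ)^b) ≠ 0 := by positivity
  have hx0 := unit_ne_zero hx
  have : x * (-1)^b = 0 := by linarith
  rcases mul_eq_zero.mp this with h' | h' <;> tauto

lemma pf_mirror : ∀ (m : ℕ) (f : ℕ → ℤ) (r : ℕ), 1 ≤ r → r < 2^m →
    pf f (2^m + r) = - pf f (2^m - r) := by
  intro m
  induction m with
  | zero => intro f r h1 h2; omega
  | succ m ih =>
    intro f r h1 h2
    rcases Nat.even_or_odd r with ⟨k, hk⟩ | ⟨k, hk⟩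
    · have hk1 : 1 ≤ k := by omega
      have hk2 : k < 2^m := by rw [pow_succ] at h2; omega
      have e1 : 2^(m+1) + r = 2 * (2^m + k) := by rw [pow_succ]; omega
      have e2 : 2^(m+1) - r = 2 * (2^m - k) := by rw [pow_succ]; omega
      rw [e1, e2, pf_even _ _ (by positivity), pf_even _ _ (by omega)]
      exact ih _ _ hk1 hk2
    · have e1 : 2^(m+1) + r = 2 * (2^m + k) + 1 := by rw [pow_succ]; omega
      have e2 : 2^(m+1) - r = 2 * (2^m - k - 1) + 1 := by rw [pow_succ] at h2 ⊢; omega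
      rw [e1, e2, pf_odd, pf_odd]
      have : (-1:ℤ)^(2^m + k) = -(-1)^(2^m - k - 1) := by
        apply neg_one_pow_opp
        have hk2 : k < 2^m := by rw [pow_succ] at h2; omega
        have e3 : 2^m + k + (2^m - k - 1) = 2^(m+1) - 1 := by rw [pow_succ]; omega
        rw [e3]
        have : 1 ≤ 2^(m+1) := Nat.one_le_two_pow
        omega
      rw [this]
      ring

/-! ### The finite paperfolding words realize the closed formula -/

lemma paper_snoc (l : List ℤ) (a : ℤ) :
    paper (l ++ [a]) = paper l ++ a :: (paper l).reverse.map (fun x => -x) := by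
  simp [paper, foldAux]

lemma paper_length (f : ℕ → ℤ) : ∀ m, (paper ((List.range m).map f)).length = 2^m - 1 := by
  intro m
  induction m with
  | zero => simp [paper, foldAux]
  | succ m ih =>
    rw [List.range_succ, List.map_append, List.map_singleton, paper_snoc]
    simp only [List.length_append, List.length_cons, List.length_map, List.length_reverse, ih]
    have : 1 ≤ 2^m := Nat.one_le_two_pow
    rw [pow_succ]
    omega

lemma paper_getD_s8 (f : ℕ → ℤ) : ∀ m, ∀ k < 2^m - 1,
    (paper ((List.range m).map f)).getD k 0 = pf f (k+1) := by
  intro m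
  induction m with
  | zero => intro k hk; simp at hk
  | succ m ih =>
    intro k hk
    have h1 : 1 ≤ 2^m := Nat.one_le_two_pow
    have hlen := paper_length f m
    rw [List.range_succ, List.map_append, List.map_singleton, paper_snoc]
    rcases lt_trichotomy k (2^m - 1) with h | h | h
    · rw [List.getD_append _ _ _ _ (by omega)]
      exact ih k h
    · subst h
      rw [List.getD_append_right _ _ _ _ (by omega)]
      have e0 : 2^m - 1 - (paper ((List.range m).map f)).length = 0 := by omega
      rw [e0]
      simp only [List.getD_cons_zero]
      have e1 : 2^m - 1 + 1 = 2^m := by omega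
      rw [e1, pf_pow2]
    · rw [List.getD_append_right _ _ _ _ (by omega)]
      have hk2 : k < 2^(m+1) - 1 := hk
      rw [pow_succ] at hk2
      set t := k - (2^m - 1) - 1 with ht
      have htl : t < 2^m - 1 := by omega
      have e2 : k - (paper ((List.range m).map f)).length = t + 1 := by omega
      rw [e2]
      simp only [List.getD_cons_succ]
      have hget : ((paper ((List.range m).map f)).reverse.map (fun x => -x)).getD t 0
          = - (paper ((List.range m).map f)).getD (2^m - 2 - t) 0 := by
        have h5 : t < ((paper ((List.range m).map f)).reverse.map (fun x => -x)).length := by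
          simp [hlen]; omega
        rw [List.getD_eq_getElem _ _ h5]
        rw [List.getElem_map, List.getElem_reverse]
        rw [List.getD_eq_getElem _ _ (by omega)]
        congr 2
        omega
      rw [hget, ih _ (by omega)]
      have e3 : k + 1 = 2^m + (t+1) := by omega
      rw [e3]
      have e4 : 2^m - 2 - t + 1 = 2^m - (t+1) := by omega
      rw [e4]
      exact (pf_mirror m f (t+1) (by omega) (by omega)).symm

/-! ### No even-order squares in any paperfolding sequence -/

lemma even_of_unit_pow {x : ℤ} {a b : ℕ} (hx : x = -1 ∨ x = 1)
    (h : x * (-1)^a = x * (-1)^(a+b)) : Even b := by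
  have hx0 : x ≠ 0 := unit_ne_zero hx
  have h2 : (-1:ℤ)^a = (-1)^a * (-1)^b := by
    rw [← pow_add]; exact mul_left_cancel₀ hx0 h
  have h3 : (-1:ℤ)^b = 1 := by
    have ha : (-1:ℤ)^a ≠ 0 := by positivity
    have h2 := mul_left_cancel₀ ha (h2.symm.trans (mul_one _).symm)
    linarith [h2]
  exact (neg_one_pow_eq_one_iff_even (by norm_num : (-1:ℤ) ≠ 1)).mp h3

theorem noEvenSq : ∀ m : ℕ, ∀ f : ℕ → ℤ, (∀ n, f n = -1 ∨ f n = 1) → Even m → 1 ≤ m →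
    ∀ b, 1 ≤ b → ¬ (∀ t < m, pf f (b+t) = pf f (b+m+t)) := by
  intro m
  induction m using Nat.strong_induction_on with
  | _ m ih =>
    intro f hf hm hm1 b hb hsq
    obtain ⟨m', hm'⟩ := hm
    have hm'' : m = 2 * m' := by omega
    have hm'1 : 1 ≤ m' := by omega
    have hoddk : ∃ w, b ≤ 2*w+1 ∧ 2*w+1 ≤ b+1 := by
      rcases Nat.even_or_odd b with ⟨c, hc⟩ | ⟨c, hc⟩
      · exact ⟨c, by omega⟩
      · exact ⟨c, by omega⟩
    obtain ⟨w, hw1, hw2⟩ := hoddk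
    have hrel := hsq (2*w+1-b) (by omega)
    have e1 : b + (2*w+1-b) = 2*w+1 := by omega
    have e2 : b + m + (2*w+1-b) = 2*(w+m')+1 := by omega
    rw [e1, e2, pf_odd, pf_odd] at hrel
    have hem' : Even m' := even_of_unit_pow (hf 0) (by rw [hrel])
    have hsq' : ∀ t < m', pf (shiftF f) ((b+1)/2 + t) = pf (shiftF f) ((b+1)/2 + m' + t) := by
      intro t ht
      set v := (b+1)/2 + t with hv
      have hv1 : 1 ≤ v := by omega
      have h2v : b ≤ 2*v ∧ 2*v ≤ b + m - 1 := by omega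
      have hrel2 := hsq (2*v - b) (by omega)
      have e3 : b + (2*v-b) = 2*v := by omega
      have e4 : b + m + (2*v-b) = 2*(v+m') := by omega
      rw [e3, e4, pf_even _ _ (by omega), pf_even _ _ (by omega)] at hrel2
      convert hrel2 using 2
      omega
    exact ih m' (by omega) (shiftF f) (fun n => hf (n+1)) hem' (by omega) ((b+1)/2)
      (by omega) hsq'

/-! ### Structure of run ends -/

section RunEnds
variable (f p : ℕ → ℤ) (E : ℕ → ℕ)
  (hf : ∀ n, f n = -1 ∨ f n = 1)
  (hp1 : ∀ n, 1 ≤ n → p n = pf f n)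
  (hE0 : E 0 = 0) (hEmono : StrictMono E)
  (hEiff : ∀ m, 1 ≤ m → ((∃ n, 1 ≤ n ∧ E n = m) ↔ p m ≠ p (m + 1)))

include hf hp1 hE0 hEmono hEiff

lemma pvals : ∀ m, 1 ≤ m → p m = 1 ∨ p m = -1 := by
  intro m hm; rw [hp1 m hm]; exact pf_unit f hf m

lemma podd : ∀ k, p (2*k+1) = f 0 * (-1)^k := by
  intro k; rw [hp1 _ (by omega), pf_odd]

lemma pairRE : ∀ k : ℕ, (p (2*k+1) ≠ p (2*k+2)) ↔ ¬ (p (2*k+2) ≠ p (2*k+3)) := by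
  intro k
  have h1 : p (2*k+3) = - p (2*k+1) := by
    have e1 : 2*k+3 = 2*(k+1)+1 := by omega
    rw [e1, podd f p E hf hp1 hE0 hEmono hEiff, podd f p E hf hp1 hE0 hEmono hEiff, pow_succ]
    ring
  have h2 := pvals f p E hf hp1 hE0 hEmono hEiff (2*k+1) (by omega)
  have h3 := pvals f p E hf hp1 hE0 hEmono hEiff (2*k+2) (by omega)
  rw [h1]
  rcases h2 with h | h <;> rcases h3 with h' | h' <;> rw [h, h'] <;> norm_num

lemma Erange : ∀ k : ℕ, E (k+1) = 2*k+1 ∨ E (k+1) = 2*k+2 := by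
  intro k
  induction k with
  | zero =>
    show E 1 = 2*0+1 ∨ E 1 = 2*0+2
    have h1 : 0 < E 1 := by have := hEmono (show 0 < 1 by omega); omega
    have h2 : (p 1 ≠ p 2) ∨ (p 2 ≠ p 3) := by
      by_contra hc
      push_neg at hc
      have := (pairRE f p E hf hp1 hE0 hEmono hEiff 0)
      simp only [show 2*0+1 = 1 by omega, show 2*0+2 = 2 by omega, show 2*0+3 = 3 by omega] at this
      tauto
    have h3 : ∃ j, 1 ≤ j ∧ E j ≤ 2 := by
      rcases h2 with h | h
      · obtain ⟨j, hj1, hj2⟩ := (hEiff 1 (by omega)).mpr h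
        exact ⟨j, hj1, by omega⟩
      · obtain ⟨j, hj1, hj2⟩ := (hEiff 2 (by omega)).mpr h
        exact ⟨j, hj1, by omega⟩
    obtain ⟨j, hj1, hj2⟩ := h3
    have : E 1 ≤ E j := hEmono.monotone hj1
    omega
  | succ k ihk =>
    show E (k+2) = 2*(k+1)+1 ∨ E (k+2) = 2*(k+1)+2
    have hmono2 : E (k+1) < E (k+2) := hEmono (by omega)
    have h2 : (p (2*k+3) ≠ p (2*k+4)) ∨ (p (2*k+4) ≠ p (2*k+5)) := by
      by_contra hc
      push_neg at hc
      have := (pairRE f p E hf hp1 hE0 hEmono hEiff (k+1))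
      simp only [show 2*(k+1)+1 = 2*k+3 by omega, show 2*(k+1)+2 = 2*k+4 by omega,
        show 2*(k+1)+3 = 2*k+5 by omega] at this
      tauto
    have h3 : ∃ j, 1 ≤ j ∧ 2*k+3 ≤ E j ∧ E j ≤ 2*k+4 := by
      rcases h2 with h | h
      · obtain ⟨j, hj1, hj2⟩ := (hEiff (2*k+3) (by omega)).mpr h
        exact ⟨j, hj1, by omega⟩
      · obtain ⟨j, hj1, hj2⟩ := (hEiff (2*k+4) (by omega)).mpr h
        exact ⟨j, hj1, by omega⟩
    obtain ⟨j, hj1, hj2, hj3⟩ := h3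
    have hjk : k+2 ≤ j := by
      by_contra hc
      have : E j ≤ E (k+1) := hEmono.monotone (show j ≤ k+1 by omega)
      omega
    have hup : E (k+2) ≤ E j := hEmono.monotone hjk
    by_contra hc
    push_neg at hc
    have hEk2 : E (k+2) = 2*k+2 := by omega
    have hEk1 : E (k+1) = 2*k+1 := by omega
    have r1 : p (2*k+1) ≠ p (2*k+2) := (hEiff (2*k+1) (by omega)).mp ⟨k+1, by omega, hEk1⟩
    have r2 : p (2*k+2) ≠ p (2*k+3) := (hEiff (2*k+2) (by omega)).mp ⟨k+2, by omega, hEk2⟩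
    exact ((pairRE f p E hf hp1 hE0 hEmono hEiff k).mp r1) r2

lemma svals : ∀ k : ℕ, p (2*k+2) * f 0 * (-1)^k = 1 ∨ p (2*k+2) * f 0 * (-1)^k = -1 := by
  intro k
  rcases pvals f p E hf hp1 hE0 hEmono hEiff (2*k+2) (by omega) with h | h <;>
    rcases hf 0 with h0 | h0 <;>
      rcases Nat.even_or_odd k with hk | hk <;>
        simp [h, h0, hk.neg_one_pow]

lemma selem : ∀ k : ℕ, (E (k+1) = 2*k+1 ↔ p (2*k+2) * f 0 * (-1)^k = -1) := by
  intro k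
  have hodd1 : p (2*k+1) = f 0 * (-1)^k := podd f p E hf hp1 hE0 hEmono hEiff k
  have hv2 := pvals f p E hf hp1 hE0 hEmono hEiff (2*k+2) (by omega)
  have hf0 := hf 0
  have hth : ((-1:ℤ)^k) = 1 ∨ ((-1:ℤ)^k) = -1 := by
    rcases Nat.even_or_odd k with hk | hk <;> simp [hk.neg_one_pow]
  constructor
  · intro h
    have hre : p (2*k+1) ≠ p (2*k+2) :=
      (hEiff (2*k+1) (by omega)).mp ⟨k+1, by omega, h⟩
    rw [hodd1] at hre
    rcases hv2 with h2 | h2 <;> rcases hf0 with h0 | h0 <;> rcases hth with h1 | h1 <;>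
      rw [h2, h0, h1] at hre ⊢ <;> revert hre <;> norm_num
  · intro h
    have hre : p (2*k+1) ≠ p (2*k+2) := by
      rw [hodd1]
      rcases hv2 with h2 | h2 <;> rcases hf0 with h0 | h0 <;> rcases hth with h1 | h1 <;>
        rw [h2, h0, h1] at h ⊢ <;> revert h <;> norm_num
    obtain ⟨j, hj1, hj2⟩ := (hEiff (2*k+1) (by omega)).mpr hre
    obtain ⟨j', hj'⟩ : ∃ j', j = j' + 1 := ⟨j - 1, by omega⟩
    subst hj'
    rcases Erange f p E hf hp1 hE0 hEmono hEiff j' with h3 | h3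
    · have : j' = k := by omega
      subst this; omega
    · omega

end RunEnds

/-! ### Cancellation helper -/

lemma cancel3 {x a b : ℤ} {u v : ℕ} (hx : x = -1 ∨ x = 1)
    (h : a * x * (-1)^u = b * x * (-1)^(u+v)) : a = (-1)^v * b := by
  have hx0 : x ≠ 0 := unit_ne_zero hx
  have hu : ((-1:ℤ)^u) ≠ 0 := by positivity
  apply mul_right_cancel₀ (mul_ne_zero hx0 hu)
  rw [pow_add] at h
  linear_combination h

theorem runSeq_square_orders (f p : ℕ → ℤ) (E : ℕ → ℕ)
    (hf : ∀ n, f n = -1 ∨ f n = 1) (hp : IsLimit f p) (hE : IsRunEnds p E)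
    (R : ℕ → ℕ) (hR : ∀ k, R k = E k - E (k - 1)) :
    ∀ i n : ℕ, 1 ≤ i → 1 ≤ n → (∀ t < n, R (i + t) = R (i + n + t)) →
      n = 1 ∨ n = 3 := by
  obtain ⟨hE0, hEmono, hEiff⟩ := hE
  -- the sequence is given by the closed formula
  have hp1 : ∀ q, 1 ≤ q → p q = pf f q := by
    intro q hq
    have hlen := paper_length f q
    have hlt : q - 1 < (paper ((List.range q).map f)).length := by
      rw [hlen]
      have := @Nat.lt_two_pow_self q
      omega
    have h := hp q (q-1) hlt
    rw [show q - 1 + 1 = q by omega] at h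
    rw [h, paper_getD_s8 f q (q-1) (by rw [hlen] at hlt; exact hlt), show q-1+1 = q by omega]
  have hf' : ∀ n, shiftF f n = -1 ∨ shiftF f n = 1 := fun n => hf (n+1)
  have hf'' : ∀ n, shiftF (shiftF f) n = -1 ∨ shiftF (shiftF f) n = 1 := fun n => hf (n+2)
  have hEb : ∀ k, 2*k - 1 ≤ E k ∧ E k ≤ 2*k := by
    intro k
    cases k with
    | zero => omega
    | succ k => rcases Erange f p E hf hp1 hE0 hEmono hEiff k with h | h <;> omega
  intro i n hi hn hsq
  -- step: differences of E across the square are equal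
  have hstep : ∀ t < n, (E (i-1+(t+1)+n):ℤ) - E (i-1+(t+1)) = (E (i-1+t+n):ℤ) - E (i-1+t) := by
    intro t ht
    have h1 := hsq t ht
    rw [hR (i+t), hR (i+n+t)] at h1
    have m1 : E (i+t-1) < E (i+t) := hEmono (by omega)
    have m2 : E (i+n+t-1) < E (i+n+t) := hEmono (by omega)
    have e1 : i-1+(t+1) = i+t := by omega
    have e2 : i-1+(t+1)+n = i+n+t := by omega
    have e3 : i-1+t = i+t-1 := by omega
    have e4 : i-1+t+n = i+n+t-1 := by omega
    rw [e2, e1, e4, e3]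
    omega
  have hkey : ∀ t ≤ n, (E (i-1+t+n):ℤ) - E (i-1+t) = (E (i-1+n):ℤ) - E (i-1) := by
    intro t
    induction t with
    | zero => intro _; simp only [Nat.add_zero]
    | succ t iht =>
      intro ht
      rw [hstep t (by omega)]
      exact iht (by omega)
  -- the "epsilon" defect is equal at distance n, throughout the window
  have hee : ∀ t ≤ n, ((2*(i-1+t):ℤ) - E (i-1+t) = (2*(i-1+t+n):ℤ) - E (i-1+t+n)) := by
    intro t ht
    have h1 := hkey t ht
    have h2 := hkey n (le_refl n)
    have b1 := hEb (i-1)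
    have b2 := hEb (i-1+n)
    have b3 := hEb (i-1+n+n)
    have b4 := hEb (i-1+t)
    have b5 := hEb (i-1+t+n)
    omega
  -- transfer to the sign sequence via `selem`, and cancel to get the relation on `pf (shiftF f)`
  have hq : ∀ k, 1 ≤ k → i-1 ≤ k → k ≤ i+n-1 →
      pf (shiftF f) k = (-1)^n * pf (shiftF f) (k+n) := by
    intro k hk1 hk2 hk3
    obtain ⟨k', rfl⟩ : ∃ k', k = k'+1 := ⟨k-1, by omega⟩
    have hsel1 := selem f p E hf hp1 hE0 hEmono hEiff k'
    have hsel2 := selem f p E hf hp1 hE0 hEmono hEiff (k'+n)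
    have hsv1 := svals f p E hf hp1 hE0 hEmono hEiff k'
    have hsv2 := svals f p E hf hp1 hE0 hEmono hEiff (k'+n)
    have heet := hee (k'+1-(i-1)) (by omega)
    rw [show i-1+(k'+1-(i-1))+n = k'+1+n by omega, show i-1+(k'+1-(i-1)) = k'+1 by omega] at heet
    have b1 := hEb (k'+1)
    have b2 := hEb (k'+1+n)
    rw [show k'+n+1 = k'+1+n by omega] at hsel2
    have hiff : E (k'+1) = 2*k'+1 ↔ E (k'+1+n) = 2*(k'+n)+1 := by omega
    have hiff2 : (p (2*k'+2) * f 0 * (-1)^k' = -1) ↔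
        (p (2*(k'+n)+2) * f 0 * (-1)^(k'+n) = -1) := by
      rw [← hsel1, ← hsel2]; exact hiff
    have hs12 : p (2*k'+2) * f 0 * (-1)^k' = p (2*(k'+n)+2) * f 0 * (-1)^(k'+n) := by
      rcases hsv1 with a | a <;> rcases hsv2 with b | b <;> rw [a, b] <;>
        rw [a, b] at hiff2 <;> revert hiff2 <;> norm_num
    have hp2 : p (2*k'+2) = pf (shiftF f) (k'+1) := by
      rw [hp1 _ (by omega), show 2*k'+2 = 2*(k'+1) by omega, pf_even f (k'+1) (by omega)]
    have hp3 : p (2*(k'+n)+2) = pf (shiftF f) (k'+1+n) := by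
      rw [hp1 _ (by omega), show 2*(k'+n)+2 = 2*(k'+n+1) by omega,
        pf_even f (k'+n+1) (by omega), show k'+n+1 = k'+1+n by omega]
    rw [hp2, hp3] at hs12
    exact cancel3 (hf 0) hs12
  -- now analyse the possible square orders
  rcases Nat.even_or_odd n with ⟨m, hm⟩ | ⟨m, hm⟩
  · -- n even : impossible
    exfalso
    have hm1 : 1 ≤ m := by omega
    have hneg : ((-1:ℤ))^n = 1 := Even.neg_one_pow ⟨m, hm⟩
    -- odd position: Even m
    obtain ⟨w, hw1, hw2⟩ : ∃ w, i ≤ 2*w+1 ∧ 2*w+1 ≤ i+1 := by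
      rcases Nat.even_or_odd i with ⟨c, hc⟩ | ⟨c, hc⟩
      · exact ⟨c, by omega⟩
      · exact ⟨c, by omega⟩
    have h := hq (2*w+1) (by omega) (by omega) (by omega)
    rw [show 2*w+1+n = 2*(w+m)+1 by omega, pf_odd, pf_odd, hneg, one_mul] at h
    have hem : Even m := even_of_unit_pow (hf' 0) (by rw [h])
    -- even positions: square of order m in pf (shiftF (shiftF f))
    have hsq2 : ∀ t < m, pf (shiftF (shiftF f)) ((i+1)/2 + t)
        = pf (shiftF (shiftF f)) ((i+1)/2 + m + t) := by
      intro t ht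
      set v := (i+1)/2 + t with hv
      have h := hq (2*v) (by omega) (by omega) (by omega)
      rw [show 2*v+n = 2*(v+m) by omega, pf_even _ _ (by omega), pf_even _ _ (by omega),
        hneg, one_mul] at h
      rw [h]
      congr 1
      omega
    exact noEvenSq m (shiftF (shiftF f)) hf'' hem (by omega) ((i+1)/2) (by omega) hsq2
  · -- n odd
    have hneg : ((-1:ℤ))^n = -1 := Odd.neg_one_pow ⟨m, by omega⟩
    rcases Nat.lt_or_ge m 2 with hm2 | hm2
    · interval_cases m
      · left; omega
      · right; omega
    exfalso
    -- relation A : even window positions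
    have hA : ∀ v, 1 ≤ v → i-1 ≤ 2*v → 2*v ≤ i+n-1 →
        pf (shiftF (shiftF f)) v = -(shiftF f 0) * (-1)^(v+m) := by
      intro v h1 h2 h3
      have h := hq (2*v) (by omega) (by omega) (by omega)
      rw [show 2*v+n = 2*(v+m)+1 by omega, pf_even _ _ (by omega), pf_odd, hneg] at h
      rw [h]; ring
    -- relation B : odd window positions
    have hB : ∀ u, i-1 ≤ 2*u+1 → 2*u+1 ≤ i+n-1 →
        pf (shiftF (shiftF f)) (u+m+1) = -(shiftF f 0) * (-1)^u := by
      intro u h1 h2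
      have h := hq (2*u+1) (by omega) (by omega) (by omega)
      rw [show 2*u+1+n = 2*(u+m+1) by omega, pf_even _ _ (by omega), pf_odd, hneg] at h
      linarith [h]
    have hxu : -(shiftF f 0) = -1 ∨ -(shiftF f 0) = 1 := by
      rcases hf' 0 with h | h <;> rw [h] <;> norm_num
    rcases Nat.lt_or_ge m 3 with hm3 | hm3
    · -- m = 2, n = 5
      have hm2' : m = 2 := by omega
      rcases Nat.even_or_odd i with ⟨a, ha⟩ | ⟨a, ha⟩
      · -- i even
        have ha1 : 1 ≤ a := by omega
        have h1 := hA (a+2) (by omega) (by omega) (by omega)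
        have h2 := hB (a-1) (by omega) (by omega)
        rw [show a-1+m+1 = a+2 by omega] at h2
        exact neq_of_odd_sum hxu (show ((a+2+m)+(a-1)) % 2 = 1 by omega) (h1.symm.trans h2)
      · -- i odd
        rcases Nat.even_or_odd a with ⟨w, hw⟩ | ⟨w, hw⟩
        · -- a even
          have h1 := hA (a+1) (by omega) (by omega) (by omega)
          have h2 := hB (a+2) (by omega) (by omega)
          rw [show a+2+m+1 = a+5 by omega] at h2
          have h3 : pf (shiftF (shiftF f)) (a+1) = pf (shiftF (shiftF f)) (a+5) := by
            rw [show a+1 = 2*w+1 by omega, show a+5 = 2*(w+2)+1 by omega, pf_odd, pf_odd,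
              pow_add]
            norm_num
          rw [h1, h2] at h3
          exact neq_of_odd_sum hxu (show ((a+1+m)+(a+2)) % 2 = 1 by omega) h3
        · -- a odd
          have h1 := hA a (by omega) (by omega) (by omega)
          have h2 := hB (a+1) (by omega) (by omega)
          rw [show a+1+m+1 = a+4 by omega] at h2
          have h3 : pf (shiftF (shiftF f)) a = pf (shiftF (shiftF f)) (a+4) := by
            rw [show a = 2*w+1 by omega, show 2*w+1+4 = 2*(w+2)+1 by omega, pf_odd, pf_odd,
              pow_add]
            norm_num
          rw [h1, h2] at h3
          exact neq_of_odd_sum hxu (show ((a+m)+(a+1)) % 2 = 1 by omega) h3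
    · -- m ≥ 3, n ≥ 7
      rcases Nat.even_or_odd i with ⟨a, ha⟩ | ⟨a, ha⟩
      · -- i even
        have ha1 : 1 ≤ a := by omega
        have hsq2 : ∀ t < 2, pf (shiftF (shiftF f)) (a+t) = pf (shiftF (shiftF f)) (a+2+t) := by
          intro t ht
          have h1 := hA (a+t) (by omega) (by omega) (by omega)
          have h2 := hA (a+t+2) (by omega) (by omega) (by omega)
          rw [h1, show a+2+t = a+t+2 by omega, h2, show a+t+2+m = a+t+m+2 by omega]
          simp [pow_add]
        exact noEvenSq 2 (shiftF (shiftF f)) hf'' ⟨1, by omega⟩ (by omega) a (by omega) hsq2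
      · -- i odd
        have hsq2 : ∀ t < 2, pf (shiftF (shiftF f)) (a+m+1+t)
            = pf (shiftF (shiftF f)) (a+m+1+2+t) := by
          intro t ht
          have h1 := hB (a+t) (by omega) (by omega)
          have h2 := hB (a+t+2) (by omega) (by omega)
          rw [show a+m+1+t = a+t+m+1 by omega, h1, show a+m+1+2+t = a+t+2+m+1 by omega, h2]
          simp [pow_add]
        exact noEvenSq 2 (shiftF (shiftF f)) hf'' ⟨1, by omega⟩ (by omega) (a+m+1)
          (by omega) hsq2
end
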